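/- arXiv:1605.09589 — 3 statements merged into one kernel-verified Lean document; each statement's English description precedes it below -/
import Mathlib

section
/- Let G be a graph and D_G the digraph obtained from an acyclic orientation of G by the kernel-by-H-walks gadget construction for a looped digraph H containing colors red, green, blue with {green, blue} independent in H, loops at green and blue. If K is a kernel by H-walks of D_G, then for every vertex v of G exactly one vertex of the green k-cycle C_v belongs to K. -/
def IsHWalk {V C : Type*} (D : V → V → Prop) (AH : C → C → Prop) (c : V → V → C)
    (n : ℕ) (w : ℕ → V) : Prop :=
  (∀ i < n, D (w i) (w (i+1))) ∧
  ∀ i, 1 ≤ i → i < n → AH (c (w (i-1)) (w i)) (c (w i) (w (i+1)))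

def ReachesByH {V C : Type*} (D : V → V → Prop) (AH : C → C → Prop) (c : V → V → C)
    (u v : V) : Prop :=
  ∃ n w, 1 ≤ n ∧ w 0 = u ∧ w n = v ∧ IsHWalk D AH c n w

def IsKernelByH {V C : Type*} (D : V → V → Prop) (AH : C → C → Prop) (c : V → V → C)
    (K : Set V) : Prop :=
  (∀ u ∈ K, ∀ v ∈ K, u ≠ v → ¬ ReachesByH D AH c u v) ∧
  (∀ u, u ∉ K → ∃ v ∈ K, ReachesByH D AH c u v)

/-- Vertex set of the gadget digraph `D_G`: the green `k`-cycles `C_v` (`cyc`),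
the copies `F_v` of the kernel-free digraph `F` (`fv`), and the 4-cycle
vertices for each arc `(u,v)` and index `i` (`qx`, positions `0 = x`, `1 = y`,
`2 = z`, `3 = w`). -/
inductive GV (α β : Type*) (k : ℕ) where
  | cyc : α → ZMod k → GV α β k
  | fv : α → β → GV α β k
  | qx : α → α → ZMod k → Fin 4 → GV α β k

/-- Arcs of the gadget digraph `D_G`. -/
inductive GArc {α β : Type*} {k : ℕ} (O : α → α → Prop) (DF : β → β → Prop) :
    GV α β k → GV α β k → Prop where
  | cycArc (v : α) (i : ZMod k) : GArc O DF (.cyc v i) (.cyc v (i + 1))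
  | fArc (v : α) {b b' : β} : DF b b' → GArc O DF (.fv v b) (.fv v b')
  | fCyc (v : α) (b : β) (i : ZMod k) : GArc O DF (.fv v b) (.cyc v i)
  | q01 {u v : α} (h : O u v) (i : ZMod k) : GArc O DF (.qx u v i 0) (.qx u v i 1)
  | q12 {u v : α} (h : O u v) (i : ZMod k) : GArc O DF (.qx u v i 1) (.qx u v i 2)
  | q23 {u v : α} (h : O u v) (i : ZMod k) : GArc O DF (.qx u v i 2) (.qx u v i 3)
  | q30 {u v : α} (h : O u v) (i : ZMod k) : GArc O DF (.qx u v i 3) (.qx u v i 0)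
  | inQ {u v : α} (h : O u v) (i : ZMod k) : GArc O DF (.cyc u i) (.qx u v i 0)
  | outQ {u v : α} (h : O u v) (i : ZMod k) : GArc O DF (.qx u v i 3) (.cyc v i)

/-- Arc coloring of the gadget digraph `D_G`: arcs inside the cycles `C_v` and
from `F_v` to `C_v` are green, arcs of `F_v` keep their color from `F`, the
arcs of the 4-cycles alternate green/blue, and the connecting arcs
`(x_{ui}, x_{(u,v)i})`, `(w_{(u,v)i}, x_{vi})` are blue. -/
def GCol {α β C : Type*} {k : ℕ} (cF : β → β → C) (green blue : C) :
    GV α β k → GV α β k → C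
  | GV.qx _ _ _ _, GV.cyc _ _ => blue
  | _, GV.cyc _ _ => green
  | GV.fv _ b1, GV.fv _ b2 => cF b1 b2
  | _, GV.qx _ _ _ j => if j = 0 ∨ j = 2 then blue else green
  | _, _ => green


section Aux

variable {α β C : Type*} {k : ℕ}

lemma gcol_fv_fv (cF : β → β → C) (green blue : C) (v v' : α) (b b' : β) :
    GCol (k := k) cF green blue (GV.fv v b) (GV.fv v' b') = cF b b' := rfl

lemma gcol_fv_cyc (cF : β → β → C) (green blue : C) (v v' : α) (b : β) (i : ZMod k) :
    GCol cF green blue (GV.fv v b) (GV.cyc v' i) = green := rfl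

lemma gcol_cyc_cyc (cF : β → β → C) (green blue : C) (v v' : α) (i j : ZMod k) :
    GCol cF green blue (GV.cyc v i) (GV.cyc v' j) = green := rfl

lemma gcol_cyc_qx (cF : β → β → C) (green blue : C) (v u u' : α) (i j : ZMod k) :
    GCol cF green blue (GV.cyc v i) (GV.qx u u' j 0) = blue := by
  show (if (0 : Fin 4) = 0 ∨ (0 : Fin 4) = 2 then blue else green) = blue
  simp

/-- Walking along the green cycle. -/
lemma cyc_reach (O : α → α → Prop) (DF : β → β → Prop) (cF : β → β → C)
    (green blue : C) (AH : C → C → Prop) (hloops : ∀ x, AH x x)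
    (v : α) (i : ZMod k) (n : ℕ) (hn : 1 ≤ n) :
    ReachesByH (GArc (k := k) O DF) AH (GCol cF green blue)
      (GV.cyc v i) (GV.cyc v (i + (n : ZMod k))) := by
  refine ⟨n, fun m => GV.cyc v (i + (m : ZMod k)), hn, by simp, rfl, ?_, ?_⟩
  · intro m _
    have h : i + ((m + 1 : ℕ) : ZMod k) = (i + (m : ZMod k)) + 1 := by push_cast; ring
    show GArc O DF (GV.cyc v (i + (m : ZMod k))) (GV.cyc v (i + ((m + 1 : ℕ) : ZMod k)))
    rw [h]
    exact GArc.cycArc v (i + (m : ZMod k))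
  · intro m _ _
    exact hloops green

/-- The trap lemma: an `H`-walk starting in `F_v` stays in `F_v` until it
possibly enters the cycle `C_v`, after which it stays in `C_v`. -/
lemma trap (O : α → α → Prop) (DF : β → β → Prop)
    (cF : β → β → C) (green blue : C) (AH : C → C → Prop)
    (hgb : ¬ AH green blue)
    (v : α) (b : β) (n : ℕ) (w : ℕ → GV α β k)
    (hw : IsHWalk (GArc O DF) AH (GCol cF green blue) n w)
    (h0 : w 0 = GV.fv v b) :
    ∀ m ≤ n, (∀ m' ≤ m, ∃ b', w m' = GV.fv v b') ∨
      (1 ≤ m ∧ ∃ j, w m = GV.cyc v j ∧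
        GCol cF green blue (w (m-1)) (w m) = green) := by
  intro m hm
  induction m with
  | zero =>
    left
    intro m' hm'
    have : m' = 0 := Nat.le_zero.mp hm'
    subst this
    exact ⟨b, h0⟩
  | succ m ih =>
    have hmn : m < n := hm
    rcases ih (Nat.le_of_lt hmn) with hfv | ⟨hm1, j, hcyc, hgreen⟩
    · obtain ⟨b', hb'⟩ := hfv m le_rfl
      have harc := hw.1 m hmn
      rw [hb'] at harc
      generalize hx : w (m + 1) = x at harc
      cases harc with
      | fArc _ hdf =>
        left
        intro m' hm'
        by_cases h : m' ≤ m
        · exact hfv m' h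
        · have : m' = m + 1 := by omega
          subst this
          exact ⟨_, hx⟩
      | fCyc _ _ i =>
        refine Or.inr ⟨by omega, i, rfl, ?_⟩
        rw [Nat.add_sub_cancel, hb']
        exact gcol_fv_cyc ..
    · have harc := hw.1 m hmn
      rw [hcyc] at harc
      generalize hx : w (m + 1) = x at harc
      cases harc with
      | cycArc =>
        refine Or.inr ⟨by omega, j + 1, rfl, ?_⟩
        rw [Nat.add_sub_cancel, hcyc]
        exact gcol_cyc_cyc ..
      | inQ h i =>
        exfalso
        have hAH := hw.2 m hm1 hmn
        rw [hgreen, hcyc, hx, gcol_cyc_qx] at hAH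
        exact hgb hAH

end Aux

theorem stmt14 {α β C : Type*} [Fintype α] (k : ℕ) (hk : 3 ≤ k)
    (AH : C → C → Prop) (green blue : C)
    (hloops : ∀ x : C, AH x x)
    (hgb : ¬ AH green blue) (hbg : ¬ AH blue green)
    (O : α → α → Prop) (hacyc : ∀ a : α, ¬ Relation.TransGen O a a)
    (DF : β → β → Prop) (hFloopless : ∀ b : β, ¬ DF b b) (cF : β → β → C)
    (hF : ¬ ∃ K : Set β, IsKernelByH DF AH cF K)
    (K : Set (GV α β k))
    (hK : IsKernelByH (GArc O DF) AH (GCol cF green blue) K) :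
    ∀ v : α, ∃! i : ZMod k, GV.cyc v i ∈ K := by
  intro v
  haveI : NeZero k := ⟨by omega⟩
  have huniq : ∀ i j : ZMod k, GV.cyc v i ∈ K → GV.cyc v j ∈ K → i = j := by
    intro i j hi hj
    by_contra hne
    have hreach := cyc_reach O DF cF green blue AH hloops v i ((j - i).val)
      (Nat.one_le_iff_ne_zero.mpr
        (fun h0 => (sub_ne_zero.mpr (Ne.symm hne)) ((ZMod.val_eq_zero _).mp h0)))
    rw [(ZMod.natCast_val (j - i)).trans (ZMod.cast_id _ _),
      show i + (j - i) = j from by ring] at hreach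
    exact hK.1 _ hi _ hj (by simpa using hne) hreach
  have hex : ∃ i : ZMod k, GV.cyc v i ∈ K := by
    by_contra hempty
    push_neg at hempty
    apply hF
    refine ⟨{b | GV.fv v b ∈ K}, ?_, ?_⟩
    · rintro b1 hb1 b2 hb2 hne ⟨n, w', hn, h0, hlast, hwalk⟩
      refine hK.1 _ hb1 _ hb2 (by simp [hne])
        ⟨n, fun m => GV.fv v (w' m), hn, by show GV.fv v (w' 0) = _; rw [h0],
          by show GV.fv v (w' n) = _; rw [hlast], ?_, ?_⟩
      · intro i hi; exact GArc.fArc v (hwalk.1 i hi)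
      · intro i h1 h2; exact hwalk.2 i h1 h2
    · intro b hb
      obtain ⟨z, hz, n, w, hn, h0, hlast, hwalk⟩ := hK.2 (GV.fv v b) hb
      rcases trap O DF cF green blue AH hgb v b n w hwalk h0 n le_rfl with
        hall | ⟨-, j, hj, -⟩
      · set g : GV α β k → β := fun x => match x with | GV.fv _ b' => b' | _ => b with hg
        obtain ⟨b', hb'⟩ := hall n le_rfl
        refine ⟨b', by rw [Set.mem_setOf_eq, ← hb', hlast]; exact hz,
          n, fun m => g (w m), hn, by show g (w 0) = b; rw [h0],
          by show g (w n) = b'; rw [hb'], ?_, ?_⟩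
        · intro i hi
          obtain ⟨bi, hbi⟩ := hall i (Nat.le_of_lt hi)
          obtain ⟨bj, hbj⟩ := hall (i + 1) hi
          have harc := hwalk.1 i hi
          rw [hbi, hbj] at harc
          show DF (g (w i)) (g (w (i + 1)))
          rw [hbi, hbj]
          cases harc with
          | fArc _ hdf => exact hdf
        · intro i h1 h2
          obtain ⟨bim, hbim⟩ := hall (i - 1) (by omega)
          obtain ⟨bi, hbi⟩ := hall i (Nat.le_of_lt h2)
          obtain ⟨bj, hbj⟩ := hall (i + 1) h2
          have hAH := hwalk.2 i h1 h2
          rw [hbim, hbi, hbj] at hAH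
          show AH (cF (g (w (i - 1))) (g (w i))) (cF (g (w i)) (g (w (i + 1))))
          rw [hbim, hbi, hbj]
          exact hAH
      · exact absurd (show GV.cyc v j ∈ K from by rw [← hj, hlast]; exact hz) (hempty j)
  obtain ⟨i, hi⟩ := hex
  exact ⟨i, hi, fun j hj => huniq j i hj hi⟩
end

section
/- With D_G as in the gadget construction: if K is a kernel by H-walks of D_G and (u,v) is an arc of the acyclic orientation →G, then x_{ui} ∈ K implies x_{vi} ∉ K (for each 1 ≤ i ≤ k). -/
lemma reach_one {V C : Type*} (D : V → V → Prop) (AH : C → C → Prop) (c : V → V → C)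
    {a b : V} (h : D a b) : ReachesByH D AH c a b := by
  refine ⟨1, fun n => if n = 0 then a else b, le_refl 1, by simp, by simp, ?_, ?_⟩
  · intro i hi
    interval_cases i
    simpa using h
  · intro i h1 h2; omega

lemma uniq_reach {V C : Type*} {D : V → V → Prop} {AH : C → C → Prop} {c : V → V → C}
    {s b : V} (hs : ∀ t, D s t → t = b)
    (hstop : ∀ t, D b t → ¬ AH (c s b) (c b t))
    {t : V} (h : ReachesByH D AH c s t) : t = b := by
  obtain ⟨n, w, hn, hw0, hwn, harc, hcol⟩ := h
  have h1 : w 1 = b := hs _ (hw0 ▸ harc 0 hn)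
  rcases eq_or_lt_of_le hn with h | h
  · rw [← hwn, ← h]; exact h1
  · exfalso
    have hc := hcol 1 le_rfl h
    have ha := harc 1 h
    rw [h1] at ha
    simp only [Nat.sub_self] at hc
    rw [hw0, h1] at hc
    exact hstop _ ha hc

theorem stmt15 {α β C : Type*} [Fintype α] (k : ℕ) (hk : 3 ≤ k)
    (AH : C → C → Prop) (green blue : C)
    (hloops : ∀ x : C, AH x x)
    (hgb : ¬ AH green blue) (hbg : ¬ AH blue green)
    (O : α → α → Prop) (hacyc : ∀ a : α, ¬ Relation.TransGen O a a)
    (DF : β → β → Prop) (hFloopless : ∀ b : β, ¬ DF b b) (cF : β → β → C)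
    (hF : ¬ ∃ K : Set β, IsKernelByH DF AH cF K)
    (K : Set (GV α β k))
    (hK : IsKernelByH (GArc O DF) AH (GCol cF green blue) K) :
    ∀ u v : α, O u v → ∀ i : ZMod k, GV.cyc u i ∈ K → GV.cyc v i ∉ K := by
  intro u v huv i hu hv
  obtain ⟨hind, habs⟩ := hK
  -- x_{(u,v)i} ∉ K, since x_{ui} ∈ K reaches it in one (blue) step
  have hx0 : (GV.qx u v i 0 : GV α β k) ∉ K := fun h =>
    hind _ hu _ h (by simp) (reach_one _ _ _ (.inQ huv i))
  -- hence it is absorbed; the only vertex reachable from it is y_{(u,v)i}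
  obtain ⟨t, htK, hr⟩ := habs _ hx0
  have hty : t = GV.qx u v i 1 := by
    refine uniq_reach ?_ ?_ hr
    · intro t' ht'
      cases ht' <;> simp_all
    · intro t' ht'
      cases ht'
      case q12 => simpa [GCol] using hgb
  rw [hty] at htK
  -- z_{(u,v)i} ∉ K since y reaches it
  have hz : (GV.qx u v i 2 : GV α β k) ∉ K := fun h =>
    hind _ htK _ h (by simp) (reach_one _ _ _ (.q12 huv i))
  -- z is absorbed; the only vertex reachable from z is w_{(u,v)i}
  obtain ⟨t2, ht2K, hr2⟩ := habs _ hz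
  have htw : t2 = GV.qx u v i 3 := by
    refine uniq_reach ?_ ?_ hr2
    · intro t' ht'
      cases ht' <;> simp_all
    · intro t' ht'
      cases ht'
      case q30 => simpa [GCol] using hgb
      case outQ => simpa [GCol] using hgb
  rw [htw] at ht2K
  -- but w reaches x_{vi}, contradicting independence
  exact hind _ ht2K _ hv (by simp) (reach_one _ _ _ (.outQ huv i))
end

section
/- Let H be a looped digraph with three vertices red, green, blue such that (red, green) ∈ A(H), (green, red) ∉ A(H), and (red, blue) ∉ A(H). Let D be a loopless digraph and construct D' by subdividing each arc (x,y) of D with a new vertex v_{(x,y)} and adding a new vertex v'_{(x,y)} with arc (v_{(x,y)}, v'_{(x,y)}); color (x, v_{(x,y)}) red, (v_{(x,y)}, y) green, and (v_{(x,y)}, v'_{(x,y)}) blue. Then for every original vertex x of D, the set of vertices reached from x by H-walks in D' is exactly N_D^+(x) ∪ { v_{(x,y)} : y ∈ N_D^+(x) }. -/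
/-- Vertex set of the subdivided digraph `D'`: original vertices, the
subdivision vertices `v_{(x,y)}` (`mid`) and the pendant vertices
`v'_{(x,y)}` (`pend`). -/
inductive SV (V : Type*) where
  | orig : V → SV V
  | mid : V → V → SV V
  | pend : V → V → SV V

/-- Arcs of `D'`: for each arc `(x,y)` of `D`, the arcs
`(x, v_{(x,y)})`, `(v_{(x,y)}, y)` and `(v_{(x,y)}, v'_{(x,y)})`. -/
inductive SArc {V : Type*} (D : V → V → Prop) : SV V → SV V → Prop where
  | toMid {x y : V} : D x y → SArc D (.orig x) (.mid x y)
  | fromMid {x y : V} : D x y → SArc D (.mid x y) (.orig y)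
  | toPend {x y : V} : D x y → SArc D (.mid x y) (.pend x y)

/-- Coloring of `D'`: `(x, v_{(x,y)})` is red, `(v_{(x,y)}, y)` is green and
`(v_{(x,y)}, v'_{(x,y)})` is blue. -/
def SCol {V C : Type*} (red green blue : C) : SV V → SV V → C
  | SV.mid _ _, SV.orig _ => green
  | SV.mid _ _, SV.pend _ _ => blue
  | _, _ => red

lemma inv_orig {V : Type*} {D : V → V → Prop} {x : V} {z : SV V}
    (h : SArc D (SV.orig x) z) : ∃ y, D x y ∧ z = SV.mid x y := by
  cases h with
  | toMid h => exact ⟨_, h, rfl⟩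

lemma inv_mid {V : Type*} {D : V → V → Prop} {x y : V} {z : SV V}
    (h : SArc D (SV.mid x y) z) : z = SV.orig y ∨ z = SV.pend x y := by
  cases h with
  | fromMid h => exact Or.inl rfl
  | toPend h => exact Or.inr rfl

theorem stmt17 {V C : Type*} (D : V → V → Prop) (hloopless : ∀ v : V, ¬ D v v)
    (AH : C → C → Prop) (red green blue : C)
    (hloops : ∀ x : C, AH x x)
    (hrg : AH red green) (hgr : ¬ AH green red) (hrb : ¬ AH red blue) :
    ∀ (x : V) (w : SV V),
      ReachesByH (SArc D) AH (SCol red green blue) (SV.orig x) w ↔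
        ((∃ y, D x y ∧ w = SV.orig y) ∨ (∃ y, D x y ∧ w = SV.mid x y)) := by
  intro x wv
  constructor
  · rintro ⟨n, w, hn, h0, hend, harcs, hH⟩
    obtain ⟨y, hxy, h1⟩ := inv_orig (h0 ▸ harcs 0 hn)
    rcases Nat.lt_or_ge n 2 with hn2 | hn2
    · -- n = 1
      have : n = 1 := by omega
      subst this
      exact Or.inr ⟨y, hxy, by rw [← hend, h1]⟩
    · obtain h2 | h2 := inv_mid (h1 ▸ harcs 1 (by omega))
      · rcases Nat.lt_or_ge n 3 with hn3 | hn3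
        · have : n = 2 := by omega
          subst this
          exact Or.inl ⟨y, hxy, by rw [← hend, h2]⟩
        · exfalso
          obtain ⟨z, hyz, h3⟩ := inv_orig (h2 ▸ harcs 2 (by omega))
          have := hH 2 (by omega) (by omega)
          rw [h1, h2, h3] at this
          exact hgr this
      · exfalso
        have := hH 1 (by omega) (by omega)
        rw [h0, h1, h2] at this
        exact hrb this
  · rintro (⟨y, hxy, rfl⟩ | ⟨y, hxy, rfl⟩)
    · refine ⟨2, fun i => if i = 0 then SV.orig x else if i = 1 then SV.mid x y else SV.orig y,
        by omega, rfl, rfl, ?_, ?_⟩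
      · intro i hi
        interval_cases i
        · exact SArc.toMid hxy
        · exact SArc.fromMid hxy
      · intro i hi1 hi2
        interval_cases i
        exact hrg
    · refine ⟨1, fun i => if i = 0 then SV.orig x else SV.mid x y,
        le_refl 1, rfl, rfl, ?_, ?_⟩
      · intro i hi
        interval_cases i
        exact SArc.toMid hxy
      · intro i hi1 hi2
        omega
end
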